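/- Let G be a finite subgroup of U(2) and let H be a maximal abelian subgroup of G. Then the index of H in its normalizer N_G(H) is 1 or 2; equivalently, the group W = N_G(H)/H has order 1 or 2. -/

import Mathlib

open Matrix
open scoped ComplexOrder

lemma nonscalar_entries (h : Matrix (Fin 2) (Fin 2) ℂ) (hns : ∀ c : ℂ, h ≠ c • 1) :
    h 0 1 ≠ 0 ∨ h 1 0 ≠ 0 ∨ h 0 0 ≠ h 1 1 := by
  by_contra hcon
  push_neg at hcon
  obtain ⟨e1, e2, e3⟩ := hcon
  refine hns (h 0 0) ?_
  rw [← Matrix.ext_iff]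
  simp only [Fin.forall_fin_two]
  simp [Matrix.one_apply, e1, e2, e3]

lemma mem_span_of_commute {h g : Matrix (Fin 2) (Fin 2) ℂ} (hns : ∀ c : ℂ, h ≠ c • 1)
    (hc : g * h = h * g) : ∃ α β : ℂ, g = α • 1 + β • h := by
  have e00 := congrFun (congrFun hc 0) 0
  have e01 := congrFun (congrFun hc 0) 1
  have e10 := congrFun (congrFun hc 1) 0
  simp only [Matrix.mul_apply, Fin.sum_univ_two] at e00 e01 e10
  rcases nonscalar_entries h hns with hb | hb | hb
  · refine ⟨g 0 0 - (g 0 1 / h 0 1) * h 0 0, g 0 1 / h 0 1, ?_⟩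
    rw [← Matrix.ext_iff]
    simp only [Fin.forall_fin_two]
    refine ⟨⟨?_, ?_⟩, ?_, ?_⟩ <;> simp [Matrix.one_apply] <;> field_simp
    · linear_combination -e00
    · linear_combination -e01
  · refine ⟨g 0 0 - (g 1 0 / h 1 0) * h 0 0, g 1 0 / h 1 0, ?_⟩
    rw [← Matrix.ext_iff]
    simp only [Fin.forall_fin_two]
    refine ⟨⟨?_, ?_⟩, ?_, ?_⟩ <;> simp [Matrix.one_apply] <;> field_simp
    · linear_combination e00
    · linear_combination e10
  · have hd : h 0 0 - h 1 1 ≠ 0 := sub_ne_zero.mpr hb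
    refine ⟨g 0 0 - ((g 0 0 - g 1 1) / (h 0 0 - h 1 1)) * h 0 0,
      (g 0 0 - g 1 1) / (h 0 0 - h 1 1), ?_⟩
    rw [← Matrix.ext_iff]
    simp only [Fin.forall_fin_two]
    refine ⟨⟨?_, ?_⟩, ?_, ?_⟩ <;> simp [Matrix.one_apply] <;> field_simp
    · linear_combination -e01
    · linear_combination e10
    · ring


lemma disc_ne_zero {h : Matrix (Fin 2) (Fin 2) ℂ} (hu : h ∈ Matrix.unitaryGroup (Fin 2) ℂ)
    (hns : ∀ c : ℂ, h ≠ c • 1) : h.trace ^ 2 - 4 * h.det ≠ 0 := by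
  intro heq
  have hd0 : h.det ≠ 0 := by
    have := congrArg Matrix.det hu.2
    rw [Matrix.det_mul, Matrix.det_one] at this
    exact left_ne_zero_of_mul_eq_one this
  set μ : ℂ := h.trace / 2 with hμdef
  have hμ : μ ≠ 0 := by
    intro h0
    have ht0 : h.trace = 0 := by
      rw [hμdef] at h0; linear_combination 2 * h0
    apply hd0
    rw [ht0] at heq
    have : (4:ℂ) * h.det = 0 := by linear_combination -heq
    simpa using this
  set N : Matrix (Fin 2) (Fin 2) ℂ := h - μ • 1 with hNdef
  have heq' : (h 0 0 + h 1 1) ^ 2 - 4 * (h 0 0 * h 1 1 - h 0 1 * h 1 0) = 0 := by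
    rw [Matrix.trace_fin_two, Matrix.det_fin_two] at heq; exact heq
  have hμ' : μ = (h 0 0 + h 1 1) / 2 := by rw [hμdef, Matrix.trace_fin_two]
  have hN2 : N * N = 0 := by
    rw [← Matrix.ext_iff]
    simp only [Fin.forall_fin_two]
    refine ⟨⟨?_, ?_⟩, ?_, ?_⟩ <;>
      simp only [hNdef, Matrix.mul_apply, Fin.sum_univ_two, Matrix.sub_apply,
        Matrix.smul_apply, Matrix.one_apply, if_true, if_false, Matrix.zero_apply, hμ'] <;>
      norm_num <;> ring_nf <;> linear_combination (1/4 : ℂ) * heq'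
  have hNtr : N.trace = 0 := by
    rw [hNdef, Matrix.trace_sub, Matrix.trace_smul, Matrix.trace_one]
    simp [hμdef]
  have hhN : h * N = μ • N := by
    have h2 : (h - μ • 1) * N = h * N - μ • N := by
      rw [sub_mul, smul_mul_assoc, one_mul]
    rw [← hNdef] at h2
    rw [hN2] at h2
    exact sub_eq_zero.mp h2.symm
  have hX : h * ((μ⁻¹) • 1 - (μ⁻¹ * μ⁻¹) • N) = 1 := by
    rw [mul_sub, Matrix.mul_smul, Matrix.mul_smul, mul_one, hhN, smul_smul]
    have e1 : μ⁻¹ * μ⁻¹ * μ = μ⁻¹ := by field_simp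
    rw [e1, ← smul_sub]
    have e2 : h - N = μ • 1 := by rw [hNdef]; abel
    rw [e2, smul_smul]
    rw [inv_mul_cancel₀ hμ, one_smul]
  have hstar : star h = (μ⁻¹) • 1 - (μ⁻¹ * μ⁻¹) • N := by
    calc star h = star h * (h * ((μ⁻¹) • 1 - (μ⁻¹ * μ⁻¹) • N)) := by rw [hX, mul_one]
      _ = (star h * h) * ((μ⁻¹) • 1 - (μ⁻¹ * μ⁻¹) • N) := by rw [mul_assoc]
      _ = _ := by rw [hu.1, one_mul]
  have htr2 : (starRingEnd ℂ) h.trace = μ⁻¹ * 2 := by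
    have hc := congrArg Matrix.trace hstar
    rw [Matrix.star_eq_conjTranspose, Matrix.trace_conjTranspose] at hc
    rw [Matrix.trace_sub, Matrix.trace_smul, Matrix.trace_smul, Matrix.trace_one, hNtr] at hc
    simpa using hc
  have hμstar : (starRingEnd ℂ) μ = μ⁻¹ := by
    have h2' : (starRingEnd ℂ) (2:ℂ) = 2 := map_ofNat _ 2
    rw [hμdef, map_div₀, htr2, h2', hμdef]
    field_simp
  have hNstar : star N = (-(μ⁻¹ * μ⁻¹)) • N := by
    rw [hNdef, star_sub, star_smul, star_one, hstar]
    have : star μ = μ⁻¹ := hμstar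
    rw [this]
    module
  have hsN : star N * N = 0 := by rw [hNstar, smul_mul_assoc, hN2, smul_zero]
  have hN0 : N = 0 := by
    rw [Matrix.star_eq_conjTranspose] at hsN
    exact Matrix.conjTranspose_mul_self_eq_zero.mp hsN
  exact hns μ (by rw [← sub_eq_zero]; exact hN0)

lemma dichotomy {h g : Matrix (Fin 2) (Fin 2) ℂ} (hu : h ∈ Matrix.unitaryGroup (Fin 2) ℂ)
    (hns : ∀ c : ℂ, h ≠ c • 1) (hc : g * h = h * g) (ht : g.trace = h.trace)
    (hd : g.det = h.det) : g = h ∨ g = h.trace • 1 - h := by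
  obtain ⟨α, β, rfl⟩ := mem_span_of_commute hns hc
  have htr : 2 * α + β * h.trace = h.trace := by
    rw [Matrix.trace_add, Matrix.trace_smul, Matrix.trace_smul, Matrix.trace_one] at ht
    simp only [smul_eq_mul] at ht
    norm_num at ht
    linear_combination ht
  have hdet : α ^ 2 + α * β * h.trace + β ^ 2 * h.det = h.det := by
    have hd' := hd
    rw [Matrix.det_fin_two, Matrix.det_fin_two] at hd'
    simp only [Matrix.add_apply, Matrix.smul_apply, Matrix.one_apply, if_true, if_false,
      smul_eq_mul, Fin.one_eq_zero_iff, Fin.zero_eq_one_iff] at hd'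
    norm_num at hd'
    rw [Matrix.trace_fin_two, Matrix.det_fin_two]
    linear_combination hd'
  have hdisc := disc_ne_zero hu hns
  have hβ : (β - 1) * (β + 1) = 0 := by
    have key : ((β - 1) * (β + 1)) * (h.trace ^ 2 - 4 * h.det) = 0 := by
      linear_combination (-(β * h.trace + 2 * α + h.trace) + (2 * β * h.trace + 2 * h.trace + 4 * α)) * htr - 4 * hdet
    exact (mul_eq_zero.mp key).resolve_right hdisc
  rcases mul_eq_zero.mp hβ with h1 | h1
  · left
    have hβ1 : β = 1 := by linear_combination h1
    have hα : α = 0 := by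
      rw [hβ1] at htr; linear_combination htr / 2
    rw [hβ1, hα]
    simp
  · right
    have hβ1 : β = -1 := by linear_combination h1
    have hα : α = h.trace := by
      rw [hβ1] at htr; linear_combination htr / 2
    rw [hβ1, hα]
    module

/-- `MaxAbelianIn H G`: `H` is a maximal abelian subgroup of `G` (both viewed as
subgroups of U(2)). -/
def MaxAbelianIn (H G : Subgroup (Matrix.unitaryGroup (Fin 2) ℂ)) : Prop :=
  H ≤ G ∧ IsMulCommutative H ∧
    ∀ H' : Subgroup (Matrix.unitaryGroup (Fin 2) ℂ),
      H' ≤ G → IsMulCommutative H' → H ≤ H' → H' = H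

lemma mem_of_commute_all {G H : Subgroup (Matrix.unitaryGroup (Fin 2) ℂ)}
    (hH : MaxAbelianIn H G) {x : Matrix.unitaryGroup (Fin 2) ℂ} (hxG : x ∈ G)
    (hcomm : ∀ a ∈ H, a * x = x * a) : x ∈ H := by
  obtain ⟨hHG, hHc, hmax⟩ := hH
  have hJmul : ∀ a b : Matrix.unitaryGroup (Fin 2) ℂ, b * x = x * b → ∀ m n : ℤ,
      (a * x ^ m) * (b * x ^ n) = (a * b) * x ^ (m + n) := by
    intro a b hb m n
    have hbx : Commute b x := hb
    rw [_root_.zpow_add]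
    calc a * x ^ m * (b * x ^ n) = a * (x ^ m * b * x ^ n) := by group
      _ = a * (b * x ^ m * x ^ n) := by rw [← (hbx.zpow_right m).eq]
      _ = a * b * (x ^ m * x ^ n) := by group
  let J : Subgroup (Matrix.unitaryGroup (Fin 2) ℂ) :=
    { carrier := {g | ∃ a ∈ H, ∃ n : ℤ, g = a * x ^ n}
      one_mem' := ⟨1, H.one_mem, 0, by simp⟩
      mul_mem' := by
        rintro g1 g2 ⟨a, ha, m, rfl⟩ ⟨b, hb, n, rfl⟩
        exact ⟨a * b, H.mul_mem ha hb, m + n, hJmul a b (hcomm b hb) m n⟩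
      inv_mem' := by
        rintro g ⟨a, ha, n, rfl⟩
        refine ⟨a⁻¹, H.inv_mem ha, -n, ?_⟩
        have hax0 : Commute a x := hcomm a ha
        have hax : Commute a⁻¹ (x ^ (-n)) := (hax0.zpow_right (-n)).inv_left
        rw [_root_.mul_inv_rev, ← _root_.zpow_neg, hax.eq] }
  have hJG : J ≤ G := by
    rintro g ⟨a, ha, n, rfl⟩
    exact G.mul_mem (hHG ha) (G.zpow_mem hxG n)
  have hJcomm : IsMulCommutative J := by
    constructor; constructor
    rintro ⟨g1, a, ha, m, rfl⟩ ⟨g2, b, hb, n, rfl⟩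
    apply Subtype.ext
    show (a * x ^ m) * (b * x ^ n) = (b * x ^ n) * (a * x ^ m)
    rw [hJmul a b (hcomm b hb) m n, hJmul b a (hcomm a ha) n m]
    have hab : a * b = b * a := by
      haveI := hHc
      exact Subgroup.mul_comm_of_mem_isMulCommutative H ha hb
    rw [hab, add_comm]
  have hHJ : H ≤ J := fun a ha => ⟨a, ha, 0, by simp⟩
  have hJH : J = H := hmax J hJG hJcomm hHJ
  have : x ∈ J := ⟨1, H.one_mem, 1, by simp⟩
  rwa [hJH] at this

lemma span_mul_comm (M : Matrix (Fin 2) (Fin 2) ℂ) (α β γ δ : ℂ) :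
    (α • 1 + β • M) * (γ • (1 : Matrix (Fin 2) (Fin 2) ℂ) + δ • M)
      = (γ • 1 + δ • M) * (α • 1 + β • M) := by
  simp only [Matrix.add_mul, Matrix.mul_add, Matrix.smul_mul, Matrix.mul_smul, smul_smul,
    Matrix.one_mul, Matrix.mul_one]
  module

/-- If `G` is a finite subgroup of U(2) and `H` a maximal abelian subgroup of `G`,
then the index of `H` in its normalizer `N_G(H) = N(H) ⊓ G` is 1 or 2. -/
theorem maxAbelian_normalizer_index
    (G H : Subgroup (Matrix.unitaryGroup (Fin 2) ℂ)) (hG : Finite G)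
    (hH : MaxAbelianIn H G) :
    H.relIndex (Subgroup.normalizer (H : Set (Matrix.unitaryGroup (Fin 2) ℂ)) ⊓ G) = 1 ∨ H.relIndex (Subgroup.normalizer (H : Set (Matrix.unitaryGroup (Fin 2) ℂ)) ⊓ G) = 2 := by
  classical
  haveI hHcomm := hH.2.1
  set K := Subgroup.normalizer (H : Set (Matrix.unitaryGroup (Fin 2) ℂ)) ⊓ G with hKdef
  by_cases hsc : ∀ g ∈ H, ∃ c : ℂ, ((g : Matrix.unitaryGroup (Fin 2) ℂ) : Matrix (Fin 2) (Fin 2) ℂ) = c • 1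
  · left
    rw [Subgroup.relIndex_eq_one]
    intro x hx
    refine mem_of_commute_all hH hx.2 ?_
    intro a ha
    obtain ⟨c, hc⟩ := hsc a ha
    apply Subtype.ext
    show (a.1 * x.1 : Matrix (Fin 2) (Fin 2) ℂ) = x.1 * a.1
    rw [hc, Matrix.smul_mul, Matrix.mul_smul, Matrix.one_mul, Matrix.mul_one]
  · push_neg at hsc
    obtain ⟨h0, h0H, h0ns⟩ := hsc
    set t : ℂ := (h0.1 : Matrix (Fin 2) (Fin 2) ℂ).trace with htdef
    have hMem' : ∀ x : Matrix.unitaryGroup (Fin 2) ℂ, x ∈ H → x.1 * h0.1 = h0.1 * x.1 := by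
      intro x hx
      exact congrArg Subtype.val (Subgroup.mul_comm_of_mem_isMulCommutative H hx h0H)
    have hMem : ∀ x : Matrix.unitaryGroup (Fin 2) ℂ, x ∈ G → (x.1 * h0.1 = h0.1 * x.1) → x ∈ H := by
      intro x hxG hx
      refine mem_of_commute_all hH hxG ?_
      intro a ha
      obtain ⟨α, β, hab⟩ := mem_span_of_commute h0ns hx
      obtain ⟨γ, δ, hab2⟩ := mem_span_of_commute h0ns (hMem' a ha)
      apply Subtype.ext
      show (a.1 * x.1 : Matrix (Fin 2) (Fin 2) ℂ) = x.1 * a.1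
      rw [hab, hab2, span_mul_comm]
    have hconj_iff : ∀ x : Matrix.unitaryGroup (Fin 2) ℂ,
        (x.1 * h0.1 * star x.1 = h0.1) ↔ x.1 * h0.1 = h0.1 * x.1 := by
      intro x
      constructor
      · intro hcx
        have h2 := congrArg (fun M => M * x.1) hcx
        rwa [mul_assoc, x.2.1, mul_one] at h2
      · intro hcx
        rw [hcx, mul_assoc, x.2.2, mul_one]
    have hdich : ∀ x : Matrix.unitaryGroup (Fin 2) ℂ, x ∈ Subgroup.normalizer (H : Set (Matrix.unitaryGroup (Fin 2) ℂ)) →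
        x.1 * h0.1 * star x.1 = h0.1 ∨ x.1 * h0.1 * star x.1 = t • 1 - h0.1 := by
      intro x hxN
      have hmem : x * h0 * x⁻¹ ∈ H := (Subgroup.mem_normalizer_iff.mp hxN h0).mp h0H
      have hcomm' : (x.1 * h0.1 * star x.1) * h0.1 = h0.1 * (x.1 * h0.1 * star x.1) :=
        hMem' _ hmem
      have htr : (x.1 * h0.1 * star x.1).trace = (h0.1 : Matrix (Fin 2) (Fin 2) ℂ).trace := by
        calc (x.1 * h0.1 * star x.1).trace = (star x.1 * (x.1 * h0.1)).trace :=
              Matrix.trace_mul_comm _ _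
          _ = ((star x.1 * x.1) * h0.1).trace := by rw [mul_assoc]
          _ = (h0.1 : Matrix (Fin 2) (Fin 2) ℂ).trace := by rw [x.2.1, one_mul]
      have hdet : (x.1 * h0.1 * star x.1).det = (h0.1 : Matrix (Fin 2) (Fin 2) ℂ).det := by
        rw [Matrix.det_mul, Matrix.det_mul]
        have hd1 : (star x.1).det * (x.1 : Matrix (Fin 2) (Fin 2) ℂ).det = 1 := by
          rw [← Matrix.det_mul, x.2.1, Matrix.det_one]
        calc x.1.det * h0.1.det * (star x.1).det
            = h0.1.det * ((star x.1).det * x.1.det) := by ring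
          _ = h0.1.det := by rw [hd1, mul_one]
      exact dichotomy h0.2 h0ns hcomm' htr hdet
    have hconj_sub : ∀ x : Matrix.unitaryGroup (Fin 2) ℂ,
        x.1 * (t • 1 - h0.1) * star x.1 = t • 1 - x.1 * h0.1 * star x.1 := by
      intro x
      rw [Matrix.mul_sub, Matrix.sub_mul, Matrix.mul_smul, mul_one, Matrix.smul_mul, x.2.2]
    have hne : (t • 1 - h0.1 : Matrix (Fin 2) (Fin 2) ℂ) ≠ h0.1 := by
      intro hcon
      apply h0ns (t / 2)
      have h2 : t • (1 : Matrix (Fin 2) (Fin 2) ℂ) = h0.1 + h0.1 := by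
        exact sub_eq_iff_eq_add.mp hcon
      calc (h0.1 : Matrix (Fin 2) (Fin 2) ℂ)
          = (1/2 : ℂ) • (h0.1 + h0.1) := by module
        _ = (1/2 : ℂ) • (t • (1 : Matrix (Fin 2) (Fin 2) ℂ)) := by rw [← h2]
        _ = (t / 2) • 1 := by rw [smul_smul, show (1/2:ℂ)*t = t/2 from by ring]
    have hcrit : ∀ x : Matrix.unitaryGroup (Fin 2) ℂ, x ∈ K →
        (x ∈ H ↔ x.1 * h0.1 * star x.1 = h0.1) := by
      intro x hxK
      constructor
      · intro hx; exact (hconj_iff x).mpr (hMem' x hx)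
      · intro hx; exact hMem x hxK.2 ((hconj_iff x).mp hx)
    by_cases hall : ∀ x : Matrix.unitaryGroup (Fin 2) ℂ, x ∈ K → x.1 * h0.1 * star x.1 = h0.1
    · left
      rw [Subgroup.relIndex_eq_one]
      intro x hx
      exact (hcrit x hx).mpr (hall x hx)
    · right
      push_neg at hall
      obtain ⟨x0, hx0K, hx0ne⟩ := hall
      have hx0' : x0.1 * h0.1 * star x0.1 = t • 1 - h0.1 :=
        (hdich x0 hx0K.1).resolve_left hx0ne
      show (H.subgroupOf K).index = 2
      rw [Subgroup.index_eq_two_iff]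
      refine ⟨⟨x0, hx0K⟩, fun b => ?_⟩
      have hconj_mul : ∀ x y : Matrix.unitaryGroup (Fin 2) ℂ,
          (x * y).1 * h0.1 * star (x * y).1 = x.1 * (y.1 * h0.1 * star y.1) * star x.1 := by
        intro x y
        show (x.1 * y.1) * h0.1 * star (x.1 * y.1) = _
        rw [Matrix.star_mul]
        simp only [mul_assoc]
      have hbx0 : ((b * ⟨x0, hx0K⟩ : ↥K) : Matrix.unitaryGroup (Fin 2) ℂ)
          = (b : Matrix.unitaryGroup (Fin 2) ℂ) * x0 := rfl
      rcases hdich (b : Matrix.unitaryGroup (Fin 2) ℂ) b.2.1 with hb | hb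
      · refine Or.inr ⟨Subgroup.mem_subgroupOf.mpr ((hcrit _ b.2).mpr hb), fun hcon => ?_⟩
        have hmem := Subgroup.mem_subgroupOf.mp hcon
        have := (hcrit _ (b * ⟨x0, hx0K⟩ : ↥K).2).mp hmem
        rw [hbx0] at this
        rw [hconj_mul, hx0', hconj_sub, hb] at this
        exact hne this
      · refine Or.inl ⟨?_, fun hcon => ?_⟩
        · apply Subgroup.mem_subgroupOf.mpr
          apply (hcrit _ (b * ⟨x0, hx0K⟩ : ↥K).2).mpr
          rw [hbx0, hconj_mul, hx0', hconj_sub, hb]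
          abel
        · have := (hcrit _ b.2).mp (Subgroup.mem_subgroupOf.mp hcon)
          rw [hb] at this
          exact hne this
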